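/- arXiv:2210.06721 — 2 statements merged into one kernel-verified Lean document; each statement's English description precedes it below -/
import Mathlib

section
/- If F is an entire function and z₀ is a local minimum of H(z) = |F(z)|² e^{-|z|²} with H(z₀) > 0, then a contradiction follows; i.e., every local minimum of H is a zero of F. -/
open Complex

/-- every local minimum of `H(z) = |F(z)|² e^{-|z|²}` (for `F` entire)
is a zero of `F`; equivalently, a local minimum with `H z₀ > 0` yields a contradiction. -/
theorem localMin_of_spectrogram_is_zero
    (F : ℂ → ℂ) (hF : Differentiable ℂ F)
    (H : ℂ → ℝ) (hH : ∀ z, H z = ‖F z‖ ^ 2 * Real.exp (-‖z‖ ^ 2))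
    (z₀ : ℂ) (hmin : IsLocalMin H z₀) :
    F z₀ = 0 := by
  by_contra hne
  set c : ℂ := (starRingEnd ℂ) z₀ with hc
  set G : ℂ → ℂ := fun z => F z * Complex.exp (-(z * c)) with hG
  have hGdiff : Differentiable ℂ G :=
    hF.mul ((differentiable_id.mul (differentiable_const c)).neg.cexp)
  have hGne : G z₀ ≠ 0 := mul_ne_zero hne (Complex.exp_ne_zero _)
  have key : ∀ z : ℂ, ‖G z‖ ^ 2 = H z * Real.exp (‖z - z₀‖ ^ 2 - ‖z₀‖ ^ 2) := by
    intro z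
    have h1 : ‖G z‖ = ‖F z‖ * Real.exp (-(z * c)).re := by
      simp [hG, Complex.norm_exp, map_mul]
    have h2 : 2 * (-(z * c)).re = -‖z‖ ^ 2 + (‖z - z₀‖ ^ 2 - ‖z₀‖ ^ 2) := by
      simp only [hc, Complex.sq_norm, Complex.normSq_apply,
        Complex.neg_re, Complex.mul_re, Complex.conj_re, Complex.conj_im,
        Complex.sub_re, Complex.sub_im]
      ring
    rw [h1, hH z, mul_pow, mul_assoc, ← Real.exp_add]
    congr 1
    rw [sq, ← Real.exp_add]
    exact congrArg Real.exp (by linarith)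
  have hGpos : 0 < ‖G z₀‖ := norm_pos_iff.mpr hGne
  have hG0sq : ‖G z₀‖ ^ 2 = H z₀ * Real.exp (-‖z₀‖ ^ 2) := by
    have := key z₀; simpa using this
  -- local max of norm of (G z)⁻¹
  have hmax : IsLocalMax (norm ∘ fun z => (G z)⁻¹) z₀ := by
    filter_upwards [hmin] with z hz
    have h1 : ‖G z₀‖ ^ 2 ≤ ‖G z‖ ^ 2 := by
      rw [key z, hG0sq]
      have : Real.exp (-‖z₀‖ ^ 2) ≤ Real.exp (‖z - z₀‖ ^ 2 - ‖z₀‖ ^ 2) := by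
        apply Real.exp_le_exp.mpr; nlinarith [sq_nonneg ‖z - z₀‖]
      have hH0 : 0 ≤ H z₀ := by
        rw [hH]; positivity
      nlinarith [this, hz, hH0, Real.exp_pos (-‖z₀‖ ^ 2), Real.exp_pos (‖z - z₀‖ ^ 2 - ‖z₀‖ ^ 2)]
    have h2 : ‖G z₀‖ ≤ ‖G z‖ := by
      nlinarith [norm_nonneg (G z), hGpos]
    simp only [Function.comp_apply, norm_inv]
    exact inv_anti₀ hGpos h2
  have hev : ∀ᶠ z in nhds z₀, DifferentiableAt ℂ (fun w => (G w)⁻¹) z := by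
    filter_upwards [hGdiff.continuous.continuousAt.eventually_ne hGne] with z hz
    exact (hGdiff z).inv hz
  have heq := Complex.eventually_eq_of_isLocalMax_norm hev hmax
  have heqG : ∀ᶠ z in nhds z₀, G z = G z₀ := by
    filter_upwards [heq] with z hz
    exact inv_injective hz
  -- now derive contradiction on punctured neighborhood
  have hbad : ∀ᶠ z in nhdsWithin z₀ {z₀}ᶜ, False := by
    have h1 : ∀ᶠ z in nhdsWithin z₀ {z₀}ᶜ, G z = G z₀ :=
      nhdsWithin_le_nhds heqG
    have h2 : ∀ᶠ z in nhdsWithin z₀ {z₀}ᶜ, H z₀ ≤ H z :=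
      nhdsWithin_le_nhds hmin
    filter_upwards [h1, h2, self_mem_nhdsWithin] with z hz1 hz2 hz3
    have hk := key z
    rw [hz1, hG0sq] at hk
    have hzne : z ≠ z₀ := hz3
    have hpos : 0 < ‖z - z₀‖ ^ 2 :=
      pow_pos (norm_pos_iff.mpr (sub_ne_zero.mpr hzne)) 2
    have hexp : Real.exp (-‖z₀‖ ^ 2) < Real.exp (‖z - z₀‖ ^ 2 - ‖z₀‖ ^ 2) := by
      apply Real.exp_lt_exp.mpr; linarith
    have hH0pos : 0 < H z₀ := by
      nlinarith [hG0sq, sq_nonneg ‖G z₀‖, hGpos, Real.exp_pos (-‖z₀‖ ^ 2), sq_nonneg (‖G z₀‖)]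
    nlinarith [hk, hexp, hH0pos, hz2, Real.exp_pos (-‖z₀‖ ^ 2)]
  exact absurd (Filter.eventually_false_iff_eq_bot.mp hbad)
    (Filter.NeBot.ne inferInstance)
end

section
/- The density functions D^max(x) = 2x(x² - 2 + 2e^{-x²/2})e^{-x²} and D^sadd(x) = 4x e^{-3x²/2} satisfy ∫_0^∞ D^max(x) dx = 1/3 and ∫_0^∞ D^sadd(x) dx = 4/3; hence the total critical value density D^crit = D^max + D^sadd integrates to 5/3. -/
open MeasureTheory

/-- `D^max(x) = 2x(x² - 2 + 2e^{-x²/2})e^{-x²}`. -/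
noncomputable def Dmax (x : ℝ) : ℝ :=
  2 * x * (x ^ 2 - 2 + 2 * Real.exp (-x ^ 2 / 2)) * Real.exp (-x ^ 2)

/-- `D^sadd(x) = 4x e^{-3x²/2}`. -/
noncomputable def Dsadd (x : ℝ) : ℝ := 4 * x * Real.exp (-3 * x ^ 2 / 2)

noncomputable def F1 (x : ℝ) : ℝ :=
  (1 - x ^ 2) * Real.exp (-x ^ 2) - (4 / 3) * Real.exp (-3 * x ^ 2 / 2)

noncomputable def F2 (x : ℝ) : ℝ := -(4 / 3) * Real.exp (-3 * x ^ 2 / 2)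

lemma hasDerivAt_exp_aux (a : ℝ) (x : ℝ) :
    HasDerivAt (fun y : ℝ => Real.exp (a * y ^ 2)) (2 * a * x * Real.exp (a * x ^ 2)) x := by
  have h : HasDerivAt (fun y : ℝ => a * y ^ 2) (2 * a * x) x := by
    have := (hasDerivAt_pow 2 x).const_mul a
    convert this using 1
    · rfl
    · rfl
    ring
  have := h.exp
  convert this using 1
  ring

lemma hasDerivAt_F2 (x : ℝ) : HasDerivAt F2 (Dsadd x) x := by
  have h := (hasDerivAt_exp_aux (-3 / 2) x).const_mul (-(4 / 3) : ℝ)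
  have e : ∀ y : ℝ, (-3 / 2 : ℝ) * y ^ 2 = -3 * y ^ 2 / 2 := fun y => by ring
  convert h using 1
  · rfl
  · rfl
  · ext y; simp only [F2, e]
  · simp only [Dsadd, e]; ring

lemma hasDerivAt_F1 (x : ℝ) : HasDerivAt F1 (Dmax x) x := by
  have h1 : HasDerivAt (fun y : ℝ => (1 - y ^ 2) * Real.exp (-y ^ 2))
      ((-2 * x) * Real.exp (-x ^ 2) + (1 - x ^ 2) * (2 * (-1) * x * Real.exp (-x ^ 2))) x := by
    have ha : HasDerivAt (fun y : ℝ => (1 : ℝ) - y ^ 2) (-2 * x) x := by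
      simpa using ((hasDerivAt_pow 2 x).const_sub 1)
    have hb := hasDerivAt_exp_aux (-1) x
    have hb' : HasDerivAt (fun y : ℝ => Real.exp (-y ^ 2)) (2 * (-1) * x * Real.exp (-x ^ 2)) x := by
      simpa [neg_mul, one_mul] using hb
    exact ha.mul hb'
  have h2 := (hasDerivAt_exp_aux (-3 / 2) x).const_mul ((4 / 3) : ℝ)
  have h := h1.sub h2
  have e : ∀ y : ℝ, (-3 / 2 : ℝ) * y ^ 2 = -3 * y ^ 2 / 2 := fun y => by ring
  have key : Real.exp (-3 * x ^ 2 / 2) = Real.exp (-x ^ 2 / 2) * Real.exp (-x ^ 2) := by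
    rw [← Real.exp_add]; ring_nf
  convert h using 1
  · rfl
  · rfl
  · ext y; simp only [F1, e, Pi.sub_apply]
  · simp only [Dmax, e, key]; ring

lemma tendsto_exp_neg_sq (a : ℝ) (ha : a < 0) :
    Filter.Tendsto (fun x : ℝ => Real.exp (a * x ^ 2)) Filter.atTop (nhds 0) := by
  apply Real.tendsto_exp_atBot.comp
  have : Filter.Tendsto (fun x : ℝ => x ^ 2) Filter.atTop Filter.atTop :=
    Filter.tendsto_pow_atTop (by norm_num)
  exact (Filter.tendsto_const_mul_atBot_of_neg ha).2 this

lemma tendsto_F1 : Filter.Tendsto F1 Filter.atTop (nhds 0) := by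
  have h1 : Filter.Tendsto (fun x : ℝ => x ^ 2 * Real.exp (-x ^ 2)) Filter.atTop (nhds 0) := by
    have := (Real.tendsto_pow_mul_exp_neg_atTop_nhds_zero 1).comp
      (Filter.tendsto_pow_atTop (n := 2) (by norm_num) (α := ℝ))
    simpa [Function.comp_def] using this
  have h2 : Filter.Tendsto (fun x : ℝ => Real.exp (-x ^ 2)) Filter.atTop (nhds 0) := by
    have := tendsto_exp_neg_sq (-1) (by norm_num)
    simpa [neg_mul] using this
  have h3 : Filter.Tendsto (fun x : ℝ => Real.exp (-3 * x ^ 2 / 2)) Filter.atTop (nhds 0) := by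
    have := tendsto_exp_neg_sq (-3 / 2) (by norm_num)
    have e : ∀ y : ℝ, (-3 / 2 : ℝ) * y ^ 2 = -3 * y ^ 2 / 2 := fun y => by ring
    simpa [e] using this
  have h := (h2.sub h1).sub (h3.const_mul (4 / 3 : ℝ))
  have h' := h.congr (fun x => show _ = F1 x by simp only [F1]; ring)
  simpa using h'

lemma tendsto_F2 : Filter.Tendsto F2 Filter.atTop (nhds 0) := by
  have h3 : Filter.Tendsto (fun x : ℝ => Real.exp (-3 * x ^ 2 / 2)) Filter.atTop (nhds 0) := by
    have := tendsto_exp_neg_sq (-3 / 2) (by norm_num)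
    have e : ∀ y : ℝ, (-3 / 2 : ℝ) * y ^ 2 = -3 * y ^ 2 / 2 := fun y => by ring
    simpa [e] using this
  have h := h3.const_mul (-(4 / 3) : ℝ)
  have h' := h.congr (fun x => show _ = F2 x by simp only [F2])
  simpa using h'

lemma Dmax_nonneg {x : ℝ} (hx : 0 ≤ x) : 0 ≤ Dmax x := by
  have h1 : (2 : ℝ) - x ^ 2 ≤ 2 * Real.exp (-x ^ 2 / 2) := by
    have := Real.add_one_le_exp (-x ^ 2 / 2)
    nlinarith
  have h2 : (0 : ℝ) ≤ x ^ 2 - 2 + 2 * Real.exp (-x ^ 2 / 2) := by linarith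
  have := (Real.exp_pos (-x ^ 2)).le
  unfold Dmax
  positivity

lemma Dsadd_nonneg {x : ℝ} (hx : 0 ≤ x) : 0 ≤ Dsadd x := by
  unfold Dsadd
  positivity

/-- `∫_0^∞ D^max = 1/3`, `∫_0^∞ D^sadd = 4/3`, hence the total critical
value density `D^crit = D^max + D^sadd` integrates to `5/3`. -/
theorem density_integrals :
    (∫ x in Set.Ioi (0 : ℝ), Dmax x = 1 / 3) ∧
    (∫ x in Set.Ioi (0 : ℝ), Dsadd x = 4 / 3) ∧
    (∫ x in Set.Ioi (0 : ℝ), (Dmax x + Dsadd x) = 5 / 3) := by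
  have hmax : ∫ x in Set.Ioi (0 : ℝ), Dmax x = 1 / 3 := by
    have := integral_Ioi_of_hasDerivAt_of_nonneg' (g := F1) (g' := Dmax) (a := 0) (l := 0)
      (fun x _ => hasDerivAt_F1 x) (fun x hx => Dmax_nonneg (le_of_lt hx)) tendsto_F1
    rw [this]
    norm_num [F1]
  have hsadd : ∫ x in Set.Ioi (0 : ℝ), Dsadd x = 4 / 3 := by
    have := integral_Ioi_of_hasDerivAt_of_nonneg' (g := F2) (g' := Dsadd) (a := 0) (l := 0)
      (fun x _ => hasDerivAt_F2 x) (fun x hx => Dsadd_nonneg (le_of_lt hx)) tendsto_F2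
    rw [this]
    norm_num [F2]
  have hsum : ∫ x in Set.Ioi (0 : ℝ), (Dmax x + Dsadd x) = 5 / 3 := by
    have h1 : IntegrableOn Dmax (Set.Ioi (0 : ℝ)) :=
      integrableOn_Ioi_deriv_of_nonneg' (fun x _ => hasDerivAt_F1 x)
        (fun x hx => Dmax_nonneg (le_of_lt hx)) tendsto_F1
    have h2 : IntegrableOn Dsadd (Set.Ioi (0 : ℝ)) :=
      integrableOn_Ioi_deriv_of_nonneg' (fun x _ => hasDerivAt_F2 x)
        (fun x hx => Dsadd_nonneg (le_of_lt hx)) tendsto_F2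
    rw [integral_add h1 h2, hmax, hsadd]
    norm_num
  exact ⟨hmax, hsadd, hsum⟩
end
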